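/- arXiv:1801.02594 — 2 statements merged into one kernel-verified Lean document; each statement's English description precedes it below -/
import Mathlib

section
/- For 0 < m < 1, the function k ↦ k / T(m,k) is strictly increasing in the positive integer k, where T(m,k) = (1-m)(1-(1-m)^k)/m. -/
noncomputable def cachingT (m : ℝ) (k : ℕ) : ℝ := (1 - m) * (1 - (1 - m) ^ k) / m

lemma key_step (q : ℝ) (h0 : 0 < q) (h1 : q < 1) (k : ℕ) (hk : 0 < k) :
    (k : ℝ) * (1 - q ^ (k + 1)) < (k + 1) * (1 - q ^ k) := by
  have hsum : ∀ i ∈ Finset.range k, q ^ k < q ^ i := by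
    intro i hi
    exact pow_lt_pow_right_of_lt_one₀ h0 h1 (Finset.mem_range.mp hi)
  have hlt : (k : ℝ) * q ^ k < ∑ i ∈ Finset.range k, q ^ i := by
    calc (k : ℝ) * q ^ k = ∑ _i ∈ Finset.range k, q ^ k := by
          simp [mul_comm]
      _ < ∑ i ∈ Finset.range k, q ^ i :=
          Finset.sum_lt_sum_of_nonempty (Finset.nonempty_range_iff.mpr hk.ne') hsum
  have hgeom : ∀ n : ℕ, 1 - q ^ n = (1 - q) * ∑ i ∈ Finset.range n, q ^ i := by
    intro n
    have := geom_sum_mul q n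
    nlinarith [this]
  rw [hgeom, hgeom, Finset.sum_range_succ]
  have hq : 0 < 1 - q := by linarith
  nlinarith [hlt, hq, mul_lt_mul_of_pos_left hlt hq]

lemma cachingT_pos (m : ℝ) (hm0 : 0 < m) (hm1 : m < 1) (k : ℕ) (hk : 0 < k) :
    0 < cachingT m k := by
  have h1 : (0:ℝ) < 1 - m := by linarith
  have h2 : (1 - m) ^ k < 1 := pow_lt_one₀ h1.le (by linarith) hk.ne'
  unfold cachingT
  exact div_pos (mul_pos h1 (by linarith)) hm0

theorem div_cachingT_strictMono (m : ℝ) (hm0 : 0 < m) (hm1 : m < 1) :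
    ∀ j k : ℕ, 0 < j → j < k → (j : ℝ) / cachingT m j < (k : ℝ) / cachingT m k := by
  have hq0 : (0:ℝ) < 1 - m := by linarith
  have hq1 : 1 - m < 1 := by linarith
  have step : ∀ k : ℕ, 0 < k →
      (k : ℝ) / cachingT m k < ((k + 1 : ℕ) : ℝ) / cachingT m (k + 1) := by
    intro k hk
    have hTk := cachingT_pos m hm0 hm1 k hk
    have hTk1 := cachingT_pos m hm0 hm1 (k + 1) (Nat.succ_pos k)
    rw [div_lt_div_iff₀ hTk hTk1]
    have h := key_step (1 - m) hq0 hq1 k hk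
    unfold cachingT
    rw [mul_div_assoc', mul_div_assoc', div_lt_div_iff₀ hm0 hm0]
    push_cast
    nlinarith [mul_lt_mul_of_pos_left h hq0, mul_pos hm0 hm0]
  intro j k hj hjk
  induction k with
  | zero => omega
  | succ n ih =>
    rcases Nat.lt_succ_iff_lt_or_eq.mp hjk with h | h
    · exact lt_trans (ih h) (step n (by omega))
    · subst h; exact step j hj
end

section
/- For fixed γ > 0 and 0 < m < 1, the baseline sum content delivery rate R_bl(K) = (K / T(m,K)) · e^{K/γ} E_1(K/γ) converges to γ m/(1-m) as K → ∞, where T(m,K) = (1-m)(1-(1-m)^K)/m and E_1(x) = ∫_1^∞ e^{-xt}/t dt. -/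
open MeasureTheory Real Set Filter

noncomputable def expIntE1 (x : ℝ) : ℝ := ∫ t in Ioi (1 : ℝ), Real.exp (-(x * t)) / t

lemma tendsto_mul_exp_aux {x : ℝ} (hx : 0 < x) :
    Tendsto (fun t : ℝ => t * Real.exp (-(x * t))) atTop (nhds 0) := by
  have h := (Real.tendsto_pow_mul_exp_neg_atTop_nhds_zero 1).comp
    (tendsto_id.const_mul_atTop hx)
  have h2 := h.div_const x
  simp only [Function.comp] at h2
  rw [zero_div] at h2
  refine h2.congr fun t => ?_
  field_simp
  simp only [id]

lemma integrableOn_exp_aux {x : ℝ} (hx : 0 < x) :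
    IntegrableOn (fun t : ℝ => Real.exp (-(x * t))) (Ioi 1) := by
  simpa [neg_mul] using exp_neg_integrableOn_Ioi 1 hx

lemma integrableOn_mul_exp_aux {x : ℝ} (hx : 0 < x) :
    IntegrableOn (fun t : ℝ => t * Real.exp (-(x * t))) (Ioi 1) := by
  apply integrable_of_isBigO_exp_neg (half_pos hx)
  · exact (continuous_id.mul (Real.continuous_exp.comp (by continuity))).continuousOn
  · apply Asymptotics.IsLittleO.isBigO
    apply Asymptotics.isLittleO_of_tendsto (fun t ht => absurd ht (Real.exp_ne_zero _))
    have h := tendsto_mul_exp_aux (half_pos hx)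
    refine h.congr fun t => ?_
    rw [eq_div_iff (Real.exp_ne_zero _), mul_assoc, ← Real.exp_add]
    ring_nf

lemma integrableOn_exp_div_aux {x : ℝ} (hx : 0 < x) :
    IntegrableOn (fun t : ℝ => Real.exp (-(x * t)) / t) (Ioi 1) := by
  apply Integrable.mono (integrableOn_exp_aux hx)
  · exact ((Real.measurable_exp.comp ((measurable_id.const_mul x).neg)).div
      measurable_id).aestronglyMeasurable
  · filter_upwards [ae_restrict_mem measurableSet_Ioi] with t ht
    have ht1 : (1 : ℝ) < t := ht
    have hexp := Real.exp_pos (-(x * t))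
    have h0t : (0:ℝ) < t := by linarith
    simp only [Real.norm_eq_abs]
    rw [abs_of_pos (div_pos hexp h0t), abs_of_pos hexp, div_le_iff₀ h0t]
    nlinarith

lemma integral_exp_aux {x : ℝ} (hx : 0 < x) :
    ∫ t in Ioi (1 : ℝ), Real.exp (-(x * t)) = Real.exp (-x) / x := by
  have h := integral_Ioi_of_hasDerivAt_of_tendsto'
    (f := fun t : ℝ => -Real.exp (-(x * t)) / x)
    (f' := fun t : ℝ => Real.exp (-(x * t))) (a := 1)
    (fun t _ => by
      have : HasDerivAt (fun t : ℝ => -(x * t)) (-x) t := by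
        simpa using ((hasDerivAt_id t).const_mul x).fun_neg
      have := (this.exp).fun_neg.div_const x
      convert this using 1
      · rfl
      field_simp)
    (integrableOn_exp_aux hx)
    (by
      have hb : Tendsto (fun t : ℝ => -(x * t)) atTop atBot :=
        tendsto_neg_atTop_atBot.comp (tendsto_id.const_mul_atTop hx)
      have := (tendsto_exp_atBot.comp hb).neg.div_const x
      simpa using this)
  rw [h]
  show (0:ℝ) - -Real.exp (-(x * 1)) / x = _
  rw [mul_one]; ring

lemma integral_mul_exp_aux {x : ℝ} (hx : 0 < x) :
    ∫ t in Ioi (1 : ℝ), t * Real.exp (-(x * t)) =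
      Real.exp (-x) * (1 / x + 1 / x ^ 2) := by
  have h := integral_Ioi_of_hasDerivAt_of_tendsto'
    (f := fun t : ℝ => -(t / x + 1 / x ^ 2) * Real.exp (-(x * t)))
    (f' := fun t : ℝ => t * Real.exp (-(x * t))) (a := 1)
    (fun t _ => by
      have h1 : HasDerivAt (fun t : ℝ => -(t / x + 1 / x ^ 2)) (-(1 / x)) t :=
        (((hasDerivAt_id t).div_const x).add_const (1 / x ^ 2)).neg
      have h2 : HasDerivAt (fun t : ℝ => Real.exp (-(x * t))) (Real.exp (-(x * t)) * (-x)) t := by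
        have : HasDerivAt (fun t : ℝ => -(x * t)) (-x) t := by
          simpa using ((hasDerivAt_id t).const_mul x).fun_neg
        exact this.exp
      have := h1.fun_mul h2
      convert this using 1
      · rfl
      field_simp
      ring)
    (integrableOn_mul_exp_aux hx)
    (by
      have h1 := (tendsto_mul_exp_aux hx).div_const x
      have hb : Tendsto (fun t : ℝ => -(x * t)) atTop atBot :=
        tendsto_neg_atTop_atBot.comp (tendsto_id.const_mul_atTop hx)
      have h2 := (tendsto_exp_atBot.comp hb).div_const (x ^ 2)
      simp only [Function.comp] at h2
      have h3 := (h1.add h2).neg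
      simp only [zero_div, add_zero, neg_zero] at h3
      refine h3.congr fun t => ?_
      ring_nf)
  rw [h]
  field_simp
  ring

lemma E1_upper {x : ℝ} (hx : 0 < x) : expIntE1 x ≤ Real.exp (-x) / x := by
  rw [expIntE1, ← integral_exp_aux hx]
  apply setIntegral_mono_on (integrableOn_exp_div_aux hx) (integrableOn_exp_aux hx)
    measurableSet_Ioi
  intro t ht
  have ht1 : (1 : ℝ) < t := ht
  rw [div_le_iff₀ (by linarith)]
  nlinarith [Real.exp_pos (-(x * t))]

lemma E1_lower {x : ℝ} (hx : 0 < x) :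
    Real.exp (-x) / x - Real.exp (-x) / x ^ 2 ≤ expIntE1 x := by
  have key : ∫ t in Ioi (1 : ℝ), (2 - t) * Real.exp (-(x * t)) =
      Real.exp (-x) / x - Real.exp (-x) / x ^ 2 := by
    have : (fun t : ℝ => (2 - t) * Real.exp (-(x * t))) =
        fun t : ℝ => 2 * Real.exp (-(x * t)) - t * Real.exp (-(x * t)) := by
      funext t; ring
    rw [this, integral_sub ((integrableOn_exp_aux hx).const_mul 2)
      (integrableOn_mul_exp_aux hx), integral_const_mul, integral_exp_aux hx,
      integral_mul_exp_aux hx]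
    field_simp
    ring
  rw [← key, expIntE1]
  have I4 : IntegrableOn (fun t : ℝ => (2 - t) * Real.exp (-(x * t))) (Ioi 1) := by
    have := ((integrableOn_exp_aux hx).const_mul 2).sub (integrableOn_mul_exp_aux hx)
    exact this.congr (ae_of_all _ fun t => by simp only [Pi.sub_apply]; ring)
  apply setIntegral_mono_on I4 (integrableOn_exp_div_aux hx) measurableSet_Ioi
  intro t ht
  have ht1 : (1 : ℝ) < t := ht
  rw [le_div_iff₀ (by linarith)]
  nlinarith [Real.exp_pos (-(x * t)), sq_nonneg (t - 1)]

lemma f_tendsto : Tendsto (fun x : ℝ => x * Real.exp x * expIntE1 x) atTop (nhds 1) := by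
  have hlow : Tendsto (fun x : ℝ => 1 - 1 / x) atTop (nhds 1) := by
    have hi : Tendsto (fun x : ℝ => x⁻¹) atTop (nhds 0) := tendsto_inv_atTop_zero
    have h := (tendsto_const_nhds (x := (1:ℝ))).sub hi
    simpa [one_div] using h
  apply tendsto_of_tendsto_of_tendsto_of_le_of_le'
    (g := fun x : ℝ => 1 - 1 / x) (h := fun _ : ℝ => (1 : ℝ)) hlow tendsto_const_nhds
  · filter_upwards [eventually_gt_atTop (0 : ℝ)] with x hx
    have h := E1_lower hx
    have hex : Real.exp x * Real.exp (-x) = 1 := by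
      rw [← Real.exp_add]; simp
    calc 1 - 1 / x = x * Real.exp x * (Real.exp (-x) / x - Real.exp (-x) / x ^ 2) := by
          have heq : x * Real.exp x * (Real.exp (-x) / x - Real.exp (-x) / x ^ 2) =
              (Real.exp x * Real.exp (-x)) * (1 - 1 / x) := by
            field_simp
          rw [heq, hex, one_mul]
      _ ≤ x * Real.exp x * expIntE1 x := by
          apply mul_le_mul_of_nonneg_left h
          positivity
  · filter_upwards [eventually_gt_atTop (0 : ℝ)] with x hx
    have h := E1_upper hx
    have hex : Real.exp x * Real.exp (-x) = 1 := by
      rw [← Real.exp_add]; simp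
    calc x * Real.exp x * expIntE1 x ≤ x * Real.exp x * (Real.exp (-x) / x) := by
          apply mul_le_mul_of_nonneg_left h
          positivity
      _ = 1 := by
          have heq : x * Real.exp x * (Real.exp (-x) / x) = Real.exp x * Real.exp (-x) := by
            field_simp
          rw [heq, hex]

/-- The baseline sum content delivery rate converges to `γ m / (1-m)`. -/
theorem baseline_rate_tendsto (γ m : ℝ) (hγ : 0 < γ) (hm0 : 0 < m) (hm1 : m < 1) :
    Tendsto (fun K : ℕ =>
        ((K : ℝ) / cachingT m K) * Real.exp ((K : ℝ) / γ) * expIntE1 ((K : ℝ) / γ))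
      atTop (nhds (γ * m / (1 - m))) := by
  have hm1' : (0:ℝ) < 1 - m := by linarith
  have hT : Tendsto (fun K : ℕ => cachingT m K) atTop (nhds ((1 - m) / m)) := by
    have hpow : Tendsto (fun K : ℕ => (1 - m) ^ K) atTop (nhds 0) :=
      tendsto_pow_atTop_nhds_zero_of_lt_one (by linarith) (by linarith)
    have := (((tendsto_const_nhds (x := (1:ℝ))).sub hpow).const_mul (1 - m)).div_const m
    simpa [cachingT] using this.congr fun K => by simp [cachingT]
  have hxK : Tendsto (fun K : ℕ => (K : ℝ) / γ) atTop atTop :=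
    (tendsto_natCast_atTop_atTop).atTop_div_const hγ
  have hf := f_tendsto.comp hxK
  have hTlim : ((1 - m) / m : ℝ) ≠ 0 := by positivity
  have hmain : Tendsto (fun K : ℕ =>
      (γ / cachingT m K) * ((K : ℝ) / γ * Real.exp ((K : ℝ) / γ) * expIntE1 ((K : ℝ) / γ)))
      atTop (nhds (γ / ((1 - m) / m) * 1)) := by
    exact ((tendsto_const_nhds (x := γ)).div hT hTlim).mul hf
  have heq : γ / ((1 - m) / m) * 1 = γ * m / (1 - m) := by
    field_simp
  rw [← heq]
  apply hmain.congr'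
  filter_upwards [eventually_gt_atTop 0] with K hK
  have hγ' : γ ≠ 0 := hγ.ne'
  rw [div_mul_eq_mul_div, div_mul_eq_mul_div, div_mul_eq_mul_div, div_mul_eq_mul_div,
    div_mul_eq_mul_div]
  congr 1
  field_simp
end
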